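/- Let 𝒫 be a family of distributions P for (Y, Z), where Y ∈ {0,1}^n and Z is a latent variable, such that: (i) for P-almost all values of Z, the total preorder on {1,...,n} induced by the conditional mean vector E_P[Y | Z] coincides with the one induced by E_P[α(Y) | Z], and (ii) this common preorder is the same for almost all Z. Then the AUC is a strictly R*-proper scoring function for (the marginal distributions of Y under) 𝒫: for every P ∈ 𝒫 and every total preorder ≾, E_P[AUC(Y, ≾)] ≤ E_P[AUC(Y, t)] for all t ∈ R*(P), with equality if and only if ≾ ∈ R*(P). -/

import Mathlib

open scoped BigOperators

/-- A total preorder on `Fin n`: reflexive, transitive and total. -/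
structure TotalPreorder (n : ℕ) where
  rel : Fin n → Fin n → Bool
  refl : ∀ i, rel i i = true
  trans : ∀ i j k, rel i j = true → rel j k = true → rel i k = true
  total : ∀ i j, rel i j = true ∨ rel j i = true

namespace TotalPreorder

/-- The rank vector `ρ_i(≾) = Σ_j (1_{j ≾ i} − 1_{j ≿ i})`. -/
def rho {n : ℕ} (p : TotalPreorder n) (i : Fin n) : ℝ :=
  ∑ j, ((if p.rel j i then (1 : ℝ) else 0) - (if p.rel i j then (1 : ℝ) else 0))

/-- The total preorder induced by a vector `v`: `i ≾ j ↔ v i ≤ v j`. -/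
noncomputable def induced {n : ℕ} (v : Fin n → ℝ) : TotalPreorder n where
  rel i j := decide (v i ≤ v j)
  refl i := by simp
  trans i j k := by
    simp only [decide_eq_true_eq]
    exact le_trans
  total i j := by
    simp only [decide_eq_true_eq]
    exact le_total _ _

/-- `p` is contained in `q` if `i ≾_p j` implies `i ≾_q j`. -/
def contained {n : ℕ} (p q : TotalPreorder n) : Prop :=
  ∀ i j, p.rel i j = true → q.rel i j = true

end TotalPreorder

open TotalPreorder

/-- Expectation of a real-valued function of a binary random vector. -/
noncomputable def pexp {n : ℕ} (P : PMF (Fin n → Bool)) (f : (Fin n → Bool) → ℝ) : ℝ :=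
  ∑ y : Fin n → Bool, (P y).toReal * f y

/-- The marginal functional: `M(P)_i = P[Y_i = 1]`. -/
noncomputable def margin {n : ℕ} (P : PMF (Fin n → Bool)) (i : Fin n) : ℝ :=
  pexp P (fun y => if y i then 1 else 0)

/-- Membership in the weak rank functional `R*(P)`: a total preorder contained in
the preorder induced by the marginal means. -/
def RstarMem {n : ℕ} (P : PMF (Fin n → Bool)) (p : TotalPreorder n) : Prop :=
  p.contained (TotalPreorder.induced (margin P))

/-- Number of positive outcomes. -/
def n1 {n : ℕ} (y : Fin n → Bool) : ℕ := ∑ i, if y i then 1 else 0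

/-- Number of negative outcomes. -/
def n0 {n : ℕ} (y : Fin n → Bool) : ℕ := n - n1 y

/-- AUC weights `α_i(y)`. -/
noncomputable def alpha {n : ℕ} (y : Fin n → Bool) (i : Fin n) : ℝ :=
  if 0 < n1 y ∧ n1 y < n then (if y i then 1 else 0) / ((n0 y : ℝ) * (n1 y : ℝ)) else 0

/-- The empirical area under the ROC curve. -/
noncomputable def AUC {n : ℕ} (y : Fin n → Bool) (p : TotalPreorder n) : ℝ :=
  1 / 2 + 1 / 2 * ∑ i, alpha y i * rho p i

/-- `s` is an `R*`-proper scoring function for the family `F`. -/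
def RStarProper {n : ℕ} (s : (Fin n → Bool) → TotalPreorder n → ℝ)
    (F : Set (PMF (Fin n → Bool))) : Prop :=
  ∀ P ∈ F, ∀ p t : TotalPreorder n, RstarMem P t →
    pexp P (fun y => s y p) ≤ pexp P (fun y => s y t)

/-- `s` is a strictly `R*`-proper scoring function for the family `F`. -/
def StrictlyRStarProper {n : ℕ} (s : (Fin n → Bool) → TotalPreorder n → ℝ)
    (F : Set (PMF (Fin n → Bool))) : Prop :=
  ∀ P ∈ F, ∀ p t : TotalPreorder n, RstarMem P t →
    pexp P (fun y => s y p) ≤ pexp P (fun y => s y t) ∧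
      (pexp P (fun y => s y p) = pexp P (fun y => s y t) ↔ RstarMem P p)


-- ===== auxiliary lemmas =====

lemma rho_sum {n : ℕ} (a : Fin n → ℝ) (p : TotalPreorder n) :
    ∑ i, a i * rho p i = ∑ i, ∑ j, (a i - a j) * (if p.rel j i then (1:ℝ) else 0) := by
  simp only [rho, Finset.mul_sum, mul_sub, sub_mul, Finset.sum_sub_distrib]
  congr 1
  exact Finset.sum_comm

lemma core_term_le {n : ℕ} (a : Fin n → ℝ) (p : TotalPreorder n) (i j : Fin n) :
    (a i - a j) * (if p.rel j i then (1:ℝ) else 0) ≤ max (a i - a j) 0 := by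
  split_ifs with h
  · rw [mul_one]; exact le_max_left _ _
  · rw [mul_zero]; exact le_max_right _ _

lemma core_le {n : ℕ} (a : Fin n → ℝ) (p : TotalPreorder n) :
    ∑ i, ∑ j, (a i - a j) * (if p.rel j i then (1:ℝ) else 0)
      ≤ ∑ i : Fin n, ∑ j : Fin n, max (a i - a j) 0 :=
  Finset.sum_le_sum fun i _ => Finset.sum_le_sum fun j _ => core_term_le a p i j

lemma core_eq_iff {n : ℕ} (a : Fin n → ℝ) (p : TotalPreorder n) :
    (∑ i, ∑ j, (a i - a j) * (if p.rel j i then (1:ℝ) else 0)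
      = ∑ i : Fin n, ∑ j : Fin n, max (a i - a j) 0)
      ↔ p.contained (TotalPreorder.induced a) := by
  rw [Finset.sum_eq_sum_iff_of_le
    (fun i _ => Finset.sum_le_sum fun j _ => core_term_le a p i j)]
  have hterm : ∀ i, ((∑ j, (a i - a j) * (if p.rel j i then (1:ℝ) else 0))
      = ∑ j : Fin n, max (a i - a j) 0)
      ↔ ∀ j, (a i - a j) * (if p.rel j i then (1:ℝ) else 0) = max (a i - a j) 0 := by
    intro i
    rw [Finset.sum_eq_sum_iff_of_le (fun j _ => core_term_le a p i j)]
    exact ⟨fun h j => h j (Finset.mem_univ j), fun h j _ => h j⟩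
  constructor
  · intro h i j hij
    have h2 := (hterm j).mp (h j (Finset.mem_univ j)) i
    simp only [TotalPreorder.induced, decide_eq_true_eq]
    by_contra hle
    push_neg at hle
    rw [if_pos hij, mul_one] at h2
    have : max (a j - a i) 0 = 0 := max_eq_right (by linarith)
    rw [this] at h2
    linarith
  · intro hc i _
    rw [hterm i]
    intro j
    rcases lt_trichotomy (a i) (a j) with hlt | heq | hgt
    · have hnot : p.rel j i = false := by
        by_contra hne
        rw [Bool.not_eq_false] at hne
        have := hc j i hne
        simp only [TotalPreorder.induced, decide_eq_true_eq] at this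
        linarith
      rw [hnot, if_neg (by simp), mul_zero, max_eq_right (by linarith)]
    · rw [heq, sub_self, zero_mul, max_eq_right le_rfl]
    · have hrel : p.rel j i = true := by
        rcases p.total i j with hij | hji
        · have := hc i j hij
          simp only [TotalPreorder.induced, decide_eq_true_eq] at this
          linarith
        · exact hji
      rw [if_pos hrel, mul_one, max_eq_left (by linarith)]

lemma pmf_sum_toReal {α : Type*} [Fintype α] (P : PMF α) : ∑ a, (P a).toReal = 1 := by
  have h := P.tsum_coe
  rw [tsum_fintype] at h
  rw [← ENNReal.toReal_sum (fun a _ => P.apply_ne_top a), h, ENNReal.toReal_one]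

lemma pexp_AUC {n : ℕ} (P : PMF (Fin n → Bool)) (p : TotalPreorder n) :
    pexp P (fun y => AUC y p)
      = 1 / 2 + 1 / 2 * ∑ i, pexp P (fun y => alpha y i) * rho p i := by
  simp only [pexp, AUC, mul_add, Finset.sum_add_distrib]
  congr 1
  · rw [← Finset.sum_mul, pmf_sum_toReal, one_mul]
  · simp only [Finset.mul_sum, Finset.sum_mul]
    rw [Finset.sum_comm]
    refine Finset.sum_congr rfl fun i _ => Finset.sum_congr rfl fun y _ => ?_
    ring

lemma map_fst_toReal {n : ℕ} {Z : Type*} [Fintype Z] (Q : PMF ((Fin n → Bool) × Z))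
    (y : Fin n → Bool) :
    ((Q.map Prod.fst) y).toReal = ∑ z, (Q (y, z)).toReal := by
  rw [PMF.map_apply, tsum_fintype,
    ENNReal.toReal_sum (fun x _ => by split_ifs <;> simp [PMF.apply_ne_top]),
    Fintype.sum_prod_type_right]
  simp [apply_ite ENNReal.toReal, Finset.sum_ite_eq, Finset.sum_ite_eq']
  refine Finset.sum_congr rfl fun z _ => ?_
  rw [Finset.sum_eq_single y, if_pos rfl]
  · intro b _ hb; exact if_neg (Ne.symm hb)
  · simp

lemma pexp_map {n : ℕ} {Z : Type*} [Fintype Z] (Q : PMF ((Fin n → Bool) × Z))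
    (f : (Fin n → Bool) → ℝ) :
    pexp (Q.map Prod.fst) f = ∑ z, ∑ y, (Q (y, z)).toReal * f y := by
  rw [Finset.sum_comm]
  unfold pexp
  refine Finset.sum_congr rfl fun y _ => ?_
  rw [map_fst_toReal, Finset.sum_mul]

lemma helper_sum_le_iff {Z : Type*} [Fintype Z] (pz u v : Z → ℝ)
    (h0 : ∀ z, pz z = 0 → u z = 0 ∧ v z = 0)
    (hiff : ∀ z z', pz z ≠ 0 → pz z' ≠ 0 → (u z ≤ v z ↔ u z' ≤ v z'))
    (hex : ∃ z, pz z ≠ 0) :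
    ((∑ z, u z) ≤ ∑ z, v z ↔ ∀ z, pz z ≠ 0 → u z ≤ v z) := by
  obtain ⟨z0, hz0⟩ := hex
  by_cases h : u z0 ≤ v z0
  · constructor
    · intro _ z hz; exact (hiff z z0 hz hz0).mpr h
    · intro hall
      refine Finset.sum_le_sum fun z _ => ?_
      by_cases hz : pz z = 0
      · rw [(h0 z hz).1, (h0 z hz).2]
      · exact hall z hz
  · have hstrict : ∑ z, v z < ∑ z, u z := by
      refine Finset.sum_lt_sum (fun z _ => ?_) ⟨z0, Finset.mem_univ z0, not_le.mp h⟩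
      by_cases hz : pz z = 0
      · rw [(h0 z hz).1, (h0 z hz).2]
      · exact (not_le.mp fun hle => h ((hiff z z0 hz hz0).mp hle)).le
    exact iff_of_false (by linarith) fun hall => h (hall z0 hz0)

/-- AUC is strictly `R*`-proper for distributions admitting a latent
variable `Z` such that (i) `E[Y | Z]` and `E[α(Y) | Z]` induce the same preorder for
almost all `Z`, and (ii) this preorder is the same for almost all `Z`. -/
theorem auc_strictly_Rstar_proper_of_latent
    {n : ℕ} {Z : Type*} [Fintype Z]
    (F : Set (PMF ((Fin n → Bool) × Z)))
    (hF : ∀ Q ∈ F,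
      let pz : Z → ℝ := fun z => ∑ y : Fin n → Bool, (Q (y, z)).toReal
      let condE : Z → ((Fin n → Bool) → ℝ) → ℝ := fun z f =>
        (∑ y : Fin n → Bool, (Q (y, z)).toReal * f y) / pz z
      (∀ z, pz z ≠ 0 → ∀ i j : Fin n,
        (condE z (fun y => if y i then 1 else 0) ≤ condE z (fun y => if y j then 1 else 0) ↔
          condE z (fun y => alpha y i) ≤ condE z (fun y => alpha y j))) ∧
      (∀ z z', pz z ≠ 0 → pz z' ≠ 0 → ∀ i j : Fin n,
        (condE z (fun y => if y i then 1 else 0) ≤ condE z (fun y => if y j then 1 else 0) ↔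
          condE z' (fun y => if y i then 1 else 0) ≤
            condE z' (fun y => if y j then 1 else 0)))) :
    StrictlyRStarProper (fun y p => AUC y p) ((fun Q => Q.map Prod.fst) '' F) := by
  intro P hP p t ht
  obtain ⟨Q, hQF, rfl⟩ := hP
  obtain ⟨h1, h2⟩ := hF Q hQF
  set P := Q.map Prod.fst with hP
  set pz : Z → ℝ := fun z => ∑ y : Fin n → Bool, (Q (y, z)).toReal with hpzdef
  set g : Z → Fin n → ℝ :=
    fun z i => ∑ y : Fin n → Bool, (Q (y, z)).toReal * (if y i then 1 else 0) with hgdef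
  set hh : Z → Fin n → ℝ :=
    fun z i => ∑ y : Fin n → Bool, (Q (y, z)).toReal * alpha y i with hhdef
  set a : Fin n → ℝ := fun i => pexp P (fun y => alpha y i) with hadef
  -- basic facts
  have hQnn : ∀ y z, (0:ℝ) ≤ (Q (y, z)).toReal := fun y z => ENNReal.toReal_nonneg
  have hQ0 : ∀ z, pz z = 0 → ∀ y, (Q (y, z)).toReal = 0 := by
    intro z hz y
    have := (Finset.sum_eq_zero_iff_of_nonneg (fun y _ => hQnn y z)).mp hz
    exact this y (Finset.mem_univ y)
  have hg0 : ∀ z, pz z = 0 → ∀ i, g z i = 0 := by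
    intro z hz i
    exact Finset.sum_eq_zero fun y _ => by rw [hQ0 z hz y, zero_mul]
  have hh0 : ∀ z, pz z = 0 → ∀ i, hh z i = 0 := by
    intro z hz i
    exact Finset.sum_eq_zero fun y _ => by rw [hQ0 z hz y, zero_mul]
  have hpz_pos : ∀ z, pz z ≠ 0 → 0 < pz z := by
    intro z hz
    exact lt_of_le_of_ne (Finset.sum_nonneg fun y _ => hQnn y z) (Ne.symm hz)
  have hex : ∃ z, pz z ≠ 0 := by
    by_contra hc
    push_neg at hc
    have hsum : ∑ z, pz z = 1 := by
      have h := pmf_sum_toReal Q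
      rw [Fintype.sum_prod_type_right] at h
      exact h
    rw [Finset.sum_eq_zero (fun z _ => hc z)] at hsum
    exact zero_ne_one hsum
  -- conditional expectation rewriting
  have hgh : ∀ z, pz z ≠ 0 → ∀ i j, (g z i ≤ g z j ↔ hh z i ≤ hh z j) := by
    intro z hz i j
    have := h1 z hz i j
    rwa [div_le_div_iff_of_pos_right (hpz_pos z hz),
      div_le_div_iff_of_pos_right (hpz_pos z hz)] at this
  have hgg : ∀ z z', pz z ≠ 0 → pz z' ≠ 0 →
      ∀ i j, (g z i ≤ g z j ↔ g z' i ≤ g z' j) := by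
    intro z z' hz hz' i j
    have := h2 z z' hz hz' i j
    rwa [div_le_div_iff_of_pos_right (hpz_pos z hz),
      div_le_div_iff_of_pos_right (hpz_pos z' hz')] at this
  -- marginal formulas
  have hmargin : ∀ i, margin P i = ∑ z, g z i := by
    intro i
    show pexp P (fun y => if y i then 1 else 0) = ∑ z, g z i
    rw [hP]
    exact pexp_map Q _
  have ha : ∀ i, a i = ∑ z, hh z i := by
    intro i
    show pexp P (fun y => alpha y i) = ∑ z, hh z i
    rw [hP]
    exact pexp_map Q _
  -- ordering equivalence
  have hord : ∀ i j, (margin P i ≤ margin P j ↔ a i ≤ a j) := by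
    intro i j
    rw [hmargin i, hmargin j, ha i, ha j]
    rw [helper_sum_le_iff pz (fun z => g z i) (fun z => g z j)
      (fun z hz => ⟨hg0 z hz i, hg0 z hz j⟩) (fun z z' hz hz' => hgg z z' hz hz' i j) hex]
    rw [helper_sum_le_iff pz (fun z => hh z i) (fun z => hh z j)
      (fun z hz => ⟨hh0 z hz i, hh0 z hz j⟩)
      (fun z z' hz hz' => (hgh z hz i j).symm.trans ((hgg z z' hz hz' i j).trans (hgh z' hz' i j)))
      hex]
    exact ⟨fun h z hz => (hgh z hz i j).mp (h z hz), fun h z hz => (hgh z hz i j).mpr (h z hz)⟩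
  -- R* membership in terms of a
  have hR : ∀ s : TotalPreorder n,
      (RstarMem P s ↔ s.contained (TotalPreorder.induced a)) := by
    intro s
    unfold RstarMem TotalPreorder.contained
    simp only [TotalPreorder.induced, decide_eq_true_eq]
    exact ⟨fun h i j hij => (hord i j).mp (h i j hij),
      fun h i j hij => (hord i j).mpr (h i j hij)⟩
  -- main argument
  have hSt : ∑ i, a i * rho t i = ∑ i : Fin n, ∑ j : Fin n, max (a i - a j) 0 := by
    rw [rho_sum]
    exact (core_eq_iff a t).mpr ((hR t).mp ht)
  have hSp : ∑ i, a i * rho p i ≤ ∑ i, a i * rho t i := by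
    rw [hSt, rho_sum]
    exact core_le a p
  have hApexp : ∀ s : TotalPreorder n,
      pexp P (fun y => AUC y s) = 1 / 2 + 1 / 2 * ∑ i, a i * rho s i := by
    intro s
    rw [pexp_AUC]
  constructor
  · simp only []
    rw [hApexp p, hApexp t]
    linarith
  · simp only []
    rw [hApexp p, hApexp t, hR p, ← core_eq_iff a p, ← rho_sum, ← hSt]
    constructor
    · intro h; linarith
    · intro h; linarith
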